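/- Let K, L be convex bodies in ℝⁿ with inradii r(K), r(L) and circumradii R(K), R(L), and let ⊙ = ⊙(K,L) be the similarity-invariant pseudometric (defined as inf over σ ∈ O(n) of the Hausdorff distance between the normalized copies (K − č(K))/R(K) and σ(L − č(L))/R(L)). Then the similarity distance d_S(K,L) = inf{α ≥ 1 : K ⊆ gL ⊆ αK + z, g a similarity, z ∈ ℝⁿ} satisfies d_S(K,L) ≤ (1 + (R(K)/r(K))·⊙)(1 + (R(L)/r(L))·⊙). -/

import Mathlib

open Metric Set

noncomputable section

/-- `E n` is the Euclidean space `ℝⁿ`. -/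
abbrev E (n : ℕ) := EuclideanSpace ℝ (Fin n)

/-- `IsCircumball A c r` : the closed ball of center `c` and radius `r` is the smallest
enclosing ball of `A` (ball of minimal radius containing `A`). -/
def IsCircumball {n : ℕ} (A : Set (E n)) (c : E n) (r : ℝ) : Prop :=
  A ⊆ closedBall c r ∧ ∀ c' r', A ⊆ closedBall c' r' → r ≤ r'

/-- A similarity of `ℝⁿ`: a map of the form `x ↦ u + λ σ x` with `λ > 0` and `σ` orthogonal. -/
def IsSimilarity {n : ℕ} (g : E n → E n) : Prop :=
  ∃ (u : E n) (l : ℝ) (σ : E n ≃ₗᵢ[ℝ] E n), 0 < l ∧ ∀ x, g x = u + l • σ x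

/-- The inradius of a set: largest radius of a closed ball contained in it. -/
def inradius {n : ℕ} (A : Set (E n)) : ℝ :=
  sSup {r : ℝ | ∃ c : E n, closedBall c r ⊆ A}

/-- The similarity distance `d_{Sim(n)}(K,L)`. -/
def simDist {n : ℕ} (K L : Set (E n)) : ℝ :=
  sInf {α : ℝ | 1 ≤ α ∧ ∃ (g : E n → E n) (z : E n), IsSimilarity g ∧
    K ⊆ g '' L ∧ g '' L ⊆ (fun x => α • x + z) '' K}

lemma aux_unitvec (n : ℕ) (hn : 1 ≤ n) : ∃ e : E n, ‖e‖ = 1 :=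
  ⟨EuclideanSpace.single ⟨0, hn⟩ (1:ℝ), by simp [EuclideanSpace.norm_single]⟩

lemma aux_convex_image {n : ℕ} {A : Set (E n)} (hA : Convex ℝ A) (r : ℝ) (q : E n) :
    Convex ℝ ((fun x => r • (x - q)) '' A) := by
  rintro x ⟨u, hu, rfl⟩ y ⟨v, hv, rfl⟩ a b ha hb hab
  refine ⟨a • u + b • v, hA hu hv ha hb hab, ?_⟩
  rw [show (b:ℝ) = 1 - a by linarith]
  module

lemma aux_convex_iso {n : ℕ} {A : Set (E n)} (hA : Convex ℝ A) (σ : E n ≃ₗᵢ[ℝ] E n) :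
    Convex ℝ (⇑σ '' A) := by
  rintro x ⟨u, hu, rfl⟩ y ⟨v, hv, rfl⟩ a b ha hb hab
  exact ⟨a • u + b • v, hA hu hv ha hb hab, by simp [map_add, map_smul]⟩

lemma aux_inradius_attained {n : ℕ} (hn : 1 ≤ n) {K : Set (E n)} (hK : IsCompact K)
    (hKi : (interior K).Nonempty) :
    0 < inradius K ∧ ∃ p : E n, closedBall p (inradius K) ⊆ K := by
  obtain ⟨e, he⟩ := aux_unitvec n hn
  obtain ⟨x0, hx0⟩ := hKi
  obtain ⟨ρ0, hρ0, hball0⟩ := Metric.isOpen_iff.mp isOpen_interior x0 hx0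
  have hb0 : closedBall x0 (ρ0/2) ⊆ K :=
    (Metric.closedBall_subset_ball (by linarith)).trans (hball0.trans interior_subset)
  set S0 := {r : ℝ | ∃ c : E n, closedBall c r ⊆ K} with hS0
  have hS0ne : S0.Nonempty := ⟨ρ0/2, x0, hb0⟩
  have hS0bdd : BddAbove S0 := by
    refine ⟨Metric.diam K, fun ρ hρ => ?_⟩
    obtain ⟨p, hp⟩ := hρ
    rcases le_or_gt ρ 0 with h | h
    · exact h.trans Metric.diam_nonneg
    · have h1 : p ∈ K := hp (mem_closedBall_self h.le)
      have h2 : p + ρ • e ∈ K := by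
        apply hp; rw [mem_closedBall, dist_eq_norm]
        simp [norm_smul, he, abs_of_pos h, add_sub_cancel_left]
      calc ρ = dist p (p + ρ • e) := by
              rw [dist_eq_norm]; simp [norm_smul, he, abs_of_pos h]
        _ ≤ Metric.diam K := Metric.dist_le_diam_of_mem hK.isBounded h1 h2
  set r := sSup S0 with hr
  have hr0 : 0 < r := lt_of_lt_of_le (by linarith) (le_csSup hS0bdd ⟨x0, hb0⟩)
  have hIr : inradius K = r := rfl
  have hseq : ∀ m : ℕ, ∃ p : E n, ∃ ρ : ℝ, closedBall p ρ ⊆ K ∧ r - r/(m+2) < ρ ∧ ρ ≤ r := by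
    intro m
    have : r - r/(m+2) < r := by
      have : 0 < r/(m+2) := by positivity
      linarith
    obtain ⟨ρ, hρS, hρgt⟩ := exists_lt_of_lt_csSup hS0ne this
    obtain ⟨p, hp⟩ := hρS
    exact ⟨p, ρ, hp, hρgt, le_csSup hS0bdd ⟨p, hp⟩⟩
  choose p ρ hsub hgt hle using hseq
  have hρpos : ∀ m, 0 < ρ m := by
    intro m
    have h1 : r/(m+2) ≤ r/2 := by
      apply div_le_div_of_nonneg_left hr0.le (by norm_num)
      have : (0:ℝ) ≤ (m:ℝ) := Nat.cast_nonneg m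
      linarith
    have := hgt m; linarith
  have hpK : ∀ m, p m ∈ K := fun m => hsub m (mem_closedBall_self (hρpos m).le)
  obtain ⟨q, hq, φ, hφ, hφt⟩ := hK.tendsto_subseq hpK
  have hρt : Filter.Tendsto (fun k => ρ (φ k)) Filter.atTop (nhds r) := by
    have hlow : Filter.Tendsto (fun k : ℕ => r - r/(k+2)) Filter.atTop (nhds r) := by
      have : Filter.Tendsto (fun k : ℕ => r/((k:ℝ)+2)) Filter.atTop (nhds 0) := by
        apply Filter.Tendsto.div_atTop (tendsto_const_nhds)
        exact Filter.tendsto_atTop_add_const_right _ _ tendsto_natCast_atTop_atTop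
      simpa using tendsto_const_nhds.sub this
    apply tendsto_of_tendsto_of_tendsto_of_le_of_le hlow tendsto_const_nhds
    · intro k
      have h1 : r - r/(φ k + 2) < ρ (φ k) := hgt (φ k)
      have h2 : r/((φ k : ℝ)+2) ≤ r/((k:ℝ)+2) := by
        apply div_le_div_of_nonneg_left hr0.le (by positivity)
        have h3 : (k:ℝ) ≤ (φ k : ℝ) := Nat.cast_le.mpr hφ.le_apply
        linarith
      linarith
    · exact fun k => hle (φ k)
  refine ⟨hIr ▸ hr0, q, ?_⟩
  rw [hIr]
  intro x hx
  have hxq : ‖x - q‖ ≤ r := by rwa [mem_closedBall, dist_eq_norm] at hx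
  have hmem : ∀ k, p (φ k) + (ρ (φ k) / r) • (x - q) ∈ K := by
    intro k
    apply hsub (φ k)
    rw [mem_closedBall, dist_eq_norm, add_sub_cancel_left, norm_smul,
      Real.norm_eq_abs, abs_of_pos (div_pos (hρpos (φ k)) hr0)]
    calc ρ (φ k) / r * ‖x - q‖ ≤ ρ (φ k) / r * r := by
          apply mul_le_mul_of_nonneg_left hxq (div_pos (hρpos (φ k)) hr0).le
      _ = ρ (φ k) := by field_simp
  have hlim : Filter.Tendsto (fun k => p (φ k) + (ρ (φ k) / r) • (x - q))
      Filter.atTop (nhds x) := by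
    have h1 : Filter.Tendsto (fun k => ρ (φ k) / r) Filter.atTop (nhds 1) := by
      have := hρt.div_const r
      simpa [div_self hr0.ne'] using this
    have h2 := Filter.Tendsto.add hφt ((h1.smul_const (x - q)))
    simpa using h2
  exact hK.isClosed.mem_of_tendsto hlim (Filter.Eventually.of_forall hmem)

lemma aux_chase {n : ℕ} {A B : Set (E n)} (hB : Convex ℝ B) {p : E n} {ρ : ℝ}
    (hρ : 0 < ρ) (hball : closedBall p ρ ⊆ B) {s : ℝ} (hs : 0 < s)
    (hAB : ∀ x ∈ A, ∃ y ∈ B, dist x y < s) :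
    ∀ x ∈ A, ∃ m ∈ B, x = (1 + s/ρ) • m + -((s/ρ) • p) := by
  intro x hx
  obtain ⟨y, hy, hxy⟩ := hAB x hx
  set t := s/ρ with ht
  have ht0 : 0 < t := div_pos hs hρ
  set w := x - y with hw
  have hwn : ‖w‖ ≤ s := by rw [hw, ← dist_eq_norm]; exact hxy.le
  have hz : p + (ρ/s) • w ∈ B := by
    apply hball
    rw [mem_closedBall, dist_eq_norm, add_sub_cancel_left, norm_smul, Real.norm_eq_abs,
      abs_of_pos (div_pos hρ hs)]
    calc ρ/s * ‖w‖ ≤ ρ/s * s := mul_le_mul_of_nonneg_left hwn (div_pos hρ hs).le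
      _ = ρ := by field_simp
  have h1t : (0:ℝ) < 1 + t := by linarith
  refine ⟨(1/(1+t)) • y + (t/(1+t)) • (p + (ρ/s) • w), hB hy hz (by positivity) (by positivity)
    (by field_simp), ?_⟩
  have e1 : (1+t) • ((1/(1+t)) • y + (t/(1+t)) • (p + (ρ/s) • w)) = y + t • (p + (ρ/s) • w) := by
    rw [smul_add, smul_smul, smul_smul]
    rw [show (1+t) * (1/(1+t)) = 1 by field_simp, show (1+t) * (t/(1+t)) = t by field_simp,
      one_smul]
  rw [e1, smul_add, smul_smul, show t * (ρ/s) = 1 by rw [ht]; field_simp, one_smul, hw]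
  abel

lemma aux_witness {n : ℕ} {K L : Set (E n)} {RK RL : ℝ} (hRK : 0 < RK) (hRL : 0 < RL)
    (cK cL : E n) (σ : E n ≃ₗᵢ[ℝ] E n) {αK αL : ℝ} (hαK : 1 ≤ αK) (hαL : 1 ≤ αL)
    (vK vL : E n)
    (h1 : ∀ x ∈ ⇑σ '' ((fun x => RK⁻¹ • (x - cK)) '' K),
      ∃ m ∈ (fun x => RL⁻¹ • (x - cL)) '' L, x = αL • m + vL)
    (h2 : ∀ y ∈ (fun x => RL⁻¹ • (x - cL)) '' L,
      ∃ m ∈ ⇑σ '' ((fun x => RK⁻¹ • (x - cK)) '' K), y = αK • m + vK) :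
    simDist K L ≤ αL * αK := by
  set g : E n → E n := fun x => RK • σ.symm (αL • (RL⁻¹ • (x - cL)) + vL) + cK with hg
  have hgsim : IsSimilarity g := by
    refine ⟨cK + RK • σ.symm vL - (RK * (αL * RL⁻¹)) • σ.symm cL, RK * (αL * RL⁻¹),
      σ.symm, by positivity, fun x => ?_⟩
    simp only [hg, map_add, map_smul, map_sub]
    module
  have hKg : K ⊆ g '' L := by
    intro k hk
    have hk' : σ (RK⁻¹ • (k - cK)) ∈ ⇑σ '' ((fun x => RK⁻¹ • (x - cK)) '' K) :=
      ⟨RK⁻¹ • (k - cK), ⟨k, hk, rfl⟩, rfl⟩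
    obtain ⟨m, hm, hEq⟩ := h1 _ hk'
    obtain ⟨l0, hl0, hlm⟩ := hm
    refine ⟨l0, hl0, ?_⟩
    show RK • σ.symm (αL • (RL⁻¹ • (l0 - cL)) + vL) + cK = k
    rw [show RL⁻¹ • (l0 - cL) = m from hlm, ← hEq, σ.symm_apply_apply, smul_smul,
      mul_inv_cancel₀ hRK.ne', one_smul]
    abel
  have hgK : g '' L ⊆ (fun x => (αL * αK) • x + ((cK - (αL*αK) • cK) + RK • σ.symm (αL • vK + vL))) '' K := by
    rintro x ⟨l0, hl0, rfl⟩
    have hy : RL⁻¹ • (l0 - cL) ∈ (fun x => RL⁻¹ • (x - cL)) '' L := ⟨l0, hl0, rfl⟩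
    obtain ⟨m, hm, hEq2⟩ := h2 _ hy
    obtain ⟨x', hx'A, hmx⟩ := hm
    obtain ⟨k, hk, hkx⟩ := hx'A
    refine ⟨k, hk, ?_⟩
    show (αL * αK) • k + ((cK - (αL*αK) • cK) + RK • σ.symm (αL • vK + vL)) = g l0
    have e0 : g l0 = RK • σ.symm (αL • (αK • m + vK) + vL) + cK := by
      rw [hg]; dsimp only; rw [hEq2]
    rw [e0, ← hmx, ← hkx]
    have e1 : σ.symm (αL • (αK • σ (RK⁻¹ • (k - cK)) + vK) + vL)
        = (αL * αK) • (RK⁻¹ • (k - cK)) + σ.symm (αL • vK + vL) := by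
      simp only [map_add, map_smul, σ.symm_apply_apply]
      module
    rw [e1, smul_add, smul_smul, smul_smul,
      show RK * (αL * αK) * RK⁻¹ = αL * αK by field_simp]
    rw [smul_sub]
    abel
  have hbdd : BddBelow {α : ℝ | 1 ≤ α ∧ ∃ (g : E n → E n) (z : E n), IsSimilarity g ∧
      K ⊆ g '' L ∧ g '' L ⊆ (fun x => α • x + z) '' K} := ⟨1, fun x hx => hx.1⟩
  exact csInf_le hbdd ⟨by nlinarith, g, _, hgsim, hKg, hgK⟩

theorem stmt18 {n : ℕ} (hn : 2 ≤ n) (R : Set (E n) → ℝ) (c : Set (E n) → E n)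
    (hRc : ∀ A : Set (E n), IsCompact A → Convex ℝ A → A.Nontrivial →
      IsCircumball A (c A) (R A))
    (K L : Set (E n)) (hK : IsCompact K) (hKc : Convex ℝ K) (hKi : (interior K).Nonempty)
    (hL : IsCompact L) (hLc : Convex ℝ L) (hLi : (interior L).Nonempty)
    (o : ℝ)
    (ho : o = ⨅ σ : E n ≃ₗᵢ[ℝ] E n,
      Metric.hausdorffDist (⇑σ '' ((fun x => (R K)⁻¹ • (x - c K)) '' K))
        ((fun x => (R L)⁻¹ • (x - c L)) '' L)) :
    simDist K L ≤ (1 + (R K / inradius K) * o) * (1 + (R L / inradius L) * o) := by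
  have hn1 : 1 ≤ n := le_trans one_le_two hn
  obtain ⟨e, he⟩ := aux_unitvec n hn1
  obtain ⟨hrK, pK, hpK⟩ := aux_inradius_attained hn1 hK hKi
  obtain ⟨hrL, pL, hpL⟩ := aux_inradius_attained hn1 hL hLi
  set rK := inradius K with hrKdef
  set rL := inradius L with hrLdef
  have hpKK : pK ∈ K := hpK (mem_closedBall_self hrK.le)
  have hpLL : pL ∈ L := hpL (mem_closedBall_self hrL.le)
  -- nontriviality and positivity of circumradii
  have hnt : ∀ (A : Set (E n)) (pA : E n) (rA : ℝ), 0 < rA →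
      closedBall pA rA ⊆ A → A.Nontrivial := by
    intro A pA rA hrA hball
    refine ⟨pA, hball (mem_closedBall_self hrA.le), pA + rA • e, hball ?_, ?_⟩
    · rw [mem_closedBall, dist_eq_norm]
      simp [norm_smul, he, abs_of_pos hrA]
    · intro hEq
      have : rA • e = 0 := by
        have := congrArg (fun z => z - pA) hEq
        simpa using this.symm
      rw [smul_eq_zero] at this
      rcases this with h | h
      · exact absurd h hrA.ne'
      · rw [h] at he; simp at he
  have hRpos : ∀ (A : Set (E n)) (pA : E n) (rA : ℝ), IsCompact A → Convex ℝ A →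
      0 < rA → closedBall pA rA ⊆ A → 0 < R A := by
    intro A pA rA hAc hAconv hrA hball
    have hsub := (hRc A hAc hAconv (hnt A pA rA hrA hball)).1
    have h1 : dist pA (c A) ≤ R A := hsub (hball (mem_closedBall_self hrA.le))
    have h2 : dist (pA + rA • e) (c A) ≤ R A := by
      apply hsub; apply hball
      rw [mem_closedBall, dist_eq_norm]
      simp [norm_smul, he, abs_of_pos hrA]
    have h3 : dist pA (pA + rA • e) = rA := by
      rw [dist_eq_norm]; simp [norm_smul, he, abs_of_pos hrA]
    have h4 := dist_triangle pA (c A) (pA + rA • e)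
    rw [dist_comm (c A) (pA + rA • e)] at h4
    rw [h3] at h4
    linarith
  have hRK : 0 < R K := hRpos K pK rK hK hKc hrK hpK
  have hRL : 0 < R L := hRpos L pL rL hL hLc hrL hpL
  -- inballs in the normalized copies
  have hinball : ∀ (A : Set (E n)) (pA : E n) (rA RA : ℝ) (cA : E n), 0 < RA →
      closedBall pA rA ⊆ A →
      closedBall (RA⁻¹ • (pA - cA)) (rA / RA) ⊆ (fun x => RA⁻¹ • (x - cA)) '' A := by
    intro A pA rA RA cA hRA hball x hx
    refine ⟨RA • x + cA, hball ?_, ?_⟩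
    · rw [mem_closedBall, dist_eq_norm]
      have h5 : RA • x + cA - pA = RA • (x - RA⁻¹ • (pA - cA)) := by
        rw [smul_sub, smul_smul, mul_inv_cancel₀ hRA.ne', one_smul]; abel
      rw [h5, norm_smul, Real.norm_eq_abs, abs_of_pos hRA]
      have hxd : ‖x - RA⁻¹ • (pA - cA)‖ ≤ rA / RA := by
        rwa [mem_closedBall, dist_eq_norm] at hx
      calc RA * ‖x - RA⁻¹ • (pA - cA)‖ ≤ RA * (rA / RA) :=
            mul_le_mul_of_nonneg_left hxd hRA.le
        _ = rA := by field_simp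
    · show RA⁻¹ • (RA • x + cA - cA) = x
      rw [add_sub_cancel_right, smul_smul, inv_mul_cancel₀ hRA.ne', one_smul]
  have o0 : 0 ≤ o := by
    rw [ho]; exact Real.iInf_nonneg fun σ => hausdorffDist_nonneg
  -- compactness / nonemptiness of normalized copies
  have hK'c : IsCompact ((fun x => (R K)⁻¹ • (x - c K)) '' K) :=
    hK.image (by fun_prop)
  have hL'c : IsCompact ((fun x => (R L)⁻¹ • (x - c L)) '' L) :=
    hL.image (by fun_prop)
  have hK'ne : ((fun x => (R K)⁻¹ • (x - c K)) '' K).Nonempty := ⟨_, ⟨pK, hpKK, rfl⟩⟩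
  have hL'ne : ((fun x => (R L)⁻¹ • (x - c L)) '' L).Nonempty := ⟨_, ⟨pL, hpLL, rfl⟩⟩
  have key : ∀ s : ℝ, o < s →
      simDist K L ≤ (1 + R K / rK * s) * (1 + R L / rL * s) := by
    intro s hs
    have hs0 : 0 < s := lt_of_le_of_lt o0 hs
    obtain ⟨σ, hσ⟩ : ∃ σ : E n ≃ₗᵢ[ℝ] E n,
        hausdorffDist (⇑σ '' ((fun x => (R K)⁻¹ • (x - c K)) '' K))
          ((fun x => (R L)⁻¹ • (x - c L)) '' L) < s := by
      rw [ho] at hs; exact exists_lt_of_ciInf_lt hs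
    have hAc : IsCompact (⇑σ '' ((fun x => (R K)⁻¹ • (x - c K)) '' K)) :=
      hK'c.image σ.continuous
    have hAne : (⇑σ '' ((fun x => (R K)⁻¹ • (x - c K)) '' K)).Nonempty := hK'ne.image σ
    have hfin : EMetric.hausdorffEdist (⇑σ '' ((fun x => (R K)⁻¹ • (x - c K)) '' K))
        ((fun x => (R L)⁻¹ • (x - c L)) '' L) ≠ ⊤ :=
      hausdorffEdist_ne_top_of_nonempty_of_bounded hAne hL'ne hAc.isBounded hL'c.isBounded
    have hρK : 0 < rK / R K := div_pos hrK hRK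
    have hρL : 0 < rL / R L := div_pos hrL hRL
    have hballA : closedBall (σ ((R K)⁻¹ • (pK - c K))) (rK / R K) ⊆
        ⇑σ '' ((fun x => (R K)⁻¹ • (x - c K)) '' K) := by
      intro x hx
      refine ⟨σ.symm x, ?_, by simp⟩
      apply hinball K pK rK (R K) (c K) hRK hpK
      rw [mem_closedBall]
      have : dist (σ.symm x) ((R K)⁻¹ • (pK - c K))
          = dist (σ (σ.symm x)) (σ ((R K)⁻¹ • (pK - c K))) := (σ.isometry.dist_eq _ _).symm
      rw [this, σ.apply_symm_apply]
      exact hx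
    have dir1 : ∀ x ∈ ⇑σ '' ((fun x => (R K)⁻¹ • (x - c K)) '' K),
        ∃ y ∈ (fun x => (R L)⁻¹ • (x - c L)) '' L, dist x y < s :=
      fun x hx => exists_dist_lt_of_hausdorffDist_lt hx hσ hfin
    have dir2 : ∀ y ∈ (fun x => (R L)⁻¹ • (x - c L)) '' L,
        ∃ x ∈ ⇑σ '' ((fun x => (R K)⁻¹ • (x - c K)) '' K), dist y x < s := by
      intro y hy
      obtain ⟨x, hxA, hd⟩ := exists_dist_lt_of_hausdorffDist_lt' hy hσ hfin
      exact ⟨x, hxA, by rwa [dist_comm]⟩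
    have chase1 := aux_chase (aux_convex_image hLc ((R L)⁻¹) (c L)) hρL
      (hinball L pL rL (R L) (c L) hRL hpL) hs0 dir1
    have chase2 := aux_chase (aux_convex_iso (aux_convex_image hKc ((R K)⁻¹) (c K)) σ) hρK
      hballA hs0 dir2
    have h1t : (1:ℝ) ≤ 1 + s/(rK/R K) := by
      have : 0 < s/(rK/R K) := div_pos hs0 hρK
      linarith
    have h2t : (1:ℝ) ≤ 1 + s/(rL/R L) := by
      have : 0 < s/(rL/R L) := div_pos hs0 hρL
      linarith
    have := aux_witness hRK hRL (c K) (c L) σ h1t h2t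
      (-((s/(rK/R K)) • σ ((R K)⁻¹ • (pK - c K)))) (-((s/(rL/R L)) • ((R L)⁻¹ • (pL - c L))))
      chase1 chase2
    calc simDist K L ≤ (1 + s/(rL/R L)) * (1 + s/(rK/R K)) := this
      _ = (1 + R K / rK * s) * (1 + R L / rL * s) := by
          rw [div_div_eq_mul_div, div_div_eq_mul_div]
          ring
  -- pass to the limit s → o⁺
  have cont : Filter.Tendsto (fun ε : ℝ => (1 + R K / rK * (o + ε)) * (1 + R L / rL * (o + ε)))
      (nhdsWithin 0 (Set.Ioi 0)) (nhds ((1 + R K / rK * o) * (1 + R L / rL * o))) := by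
    have hc : Continuous (fun ε : ℝ => (1 + R K / rK * (o + ε)) * (1 + R L / rL * (o + ε))) :=
      (continuous_const.add (continuous_const.mul (continuous_const.add continuous_id))).mul
        (continuous_const.add (continuous_const.mul (continuous_const.add continuous_id)))
    have := (hc.tendsto 0).mono_left (nhdsWithin_le_nhds (s := Set.Ioi (0:ℝ)))
    simpa using this
  refine ge_of_tendsto cont ?_
  filter_upwards [eventually_mem_nhdsWithin] with ε hε
  exact key (o + ε) (by simpa using (Set.mem_Ioi.mp hε))
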